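/- For every ε > 0 there exists M ∈ ℕ such that for all n, h > 0 and x ∈ ℤ^d (d ≥ 2): the uniform measure on self-avoiding bridges of length n with at least M z-renewal times and with ⟨Γ_n, e₁⟩ = h gives probability at most ε to the event Γ_n = x. Concretely, M = ⌈log ε / log(1/(2d−1))⌉ works via the resampling map at z-renewal times. -/

import Mathlib

def IsSAW (d n : ℕ) (γ : ℕ → Fin d → ℤ) : Prop :=
  γ 0 = 0 ∧
  (∀ i, i < n → ∑ j, |γ (i + 1) j - γ i j| = 1) ∧
  (∀ i, i ≤ n → ∀ k, k ≤ n → γ i = γ k → i = k)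

def IsBridge (d n : ℕ) [NeZero d] (γ : ℕ → Fin d → ℤ) : Prop :=
  IsSAW d n γ ∧ ∀ kk, 0 < kk → kk ≤ n → 0 < γ kk 0 ∧ γ kk 0 ≤ γ n 0

def IsZRenewal (d n : ℕ) [NeZero d] (γ : ℕ → Fin d → ℤ) (k : ℕ) : Prop :=
  k + 2 ≤ n ∧ (∀ i, i < k + 1 → γ i 0 < γ (k + 1) 0) ∧
    γ (k + 1) 0 = γ (k + 2) 0 ∧
    ∀ i, k + 2 < i → i ≤ n → γ (k + 1) 0 < γ i 0

noncomputable def zRenCount (d n : ℕ) [NeZero d] (γ : ℕ → Fin d → ℤ) : ℕ :=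
  Nat.card {k : ℕ // IsZRenewal d n γ k}

/-- Bridges of length n, with at least M z-renewal times, endpoint at e₁-height hgt,
frozen after time n (so the set is finite). -/
def BridgeSet (d n M : ℕ) [NeZero d] (hgt : ℤ) : Set (ℕ → Fin d → ℤ) :=
  {γ | IsBridge d n γ ∧ M ≤ zRenCount d n γ ∧ γ n 0 = hgt ∧ ∀ i, n ≤ i → γ i = γ n}

open scoped Classical

/-! ### Auxiliary definitions -/

/-- Lateral unit vectors: unit steps orthogonal to `e₁`. -/
def LatStep (d : ℕ) [NeZero d] (v : Fin d → ℤ) : Prop :=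
  (∑ j, |v j|) = 1 ∧ v 0 = 0

/-- The finset of z-renewal times. -/
noncomputable def rf (d n : ℕ) [NeZero d] (γ : ℕ → Fin d → ℤ) : Finset ℕ :=
  (Finset.range n).filter (fun k => IsZRenewal d n γ k)

/-- The renewal step. -/
def wstep {d : ℕ} (γ : ℕ → Fin d → ℤ) (k : ℕ) : Fin d → ℤ := γ (k + 2) - γ (k + 1)

/-- Resample the renewal steps of `γ` according to `t`. -/
noncomputable def shiftW (d n : ℕ) [NeZero d] (γ : ℕ → Fin d → ℤ)
    (t : ℕ → Fin d → ℤ) : ℕ → Fin d → ℤ :=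
  fun m => γ m + ∑ k ∈ (rf d n γ).filter (fun k => k + 2 ≤ m), (t k - wstep γ k)

section basics

variable {d n : ℕ} [NeZero d] {γ : ℕ → Fin d → ℤ} {t t' : ℕ → Fin d → ℤ}

lemma mem_rf {k : ℕ} : k ∈ rf d n γ ↔ IsZRenewal d n γ k := by
  simp only [rf, Finset.mem_filter, Finset.mem_range]
  constructor
  · exact fun h => h.2
  · intro h; exact ⟨by have := h.1; omega, h⟩

lemma isZR_of_heights {f g : ℕ → Fin d → ℤ} (h : ∀ m, f m 0 = g m 0) (k : ℕ) :
    IsZRenewal d n f k ↔ IsZRenewal d n g k := by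
  simp only [IsZRenewal, h]

lemma zRenCount_eq_card_rf : zRenCount d n γ = (rf d n γ).card := by
  rw [zRenCount]
  have : {k : ℕ | IsZRenewal d n γ k} = (↑(rf d n γ) : Set ℕ) := by
    ext k; simp [mem_rf]
  calc Nat.card {k : ℕ // IsZRenewal d n γ k} = Nat.card {k : ℕ | IsZRenewal d n γ k} := rfl
    _ = ({k : ℕ | IsZRenewal d n γ k} : Set ℕ).ncard := Nat.card_coe_set_eq _
    _ = (↑(rf d n γ) : Set ℕ).ncard := by rw [this]
    _ = (rf d n γ).card := Set.ncard_coe_finset _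

lemma wstep_height {k : ℕ} (hk : IsZRenewal d n γ k) : wstep γ k 0 = 0 := by
  simp only [wstep, Pi.sub_apply]
  rw [← hk.2.2.1, sub_self]

lemma wstep_lat (hγ : IsSAW d n γ) {k : ℕ} (hk : IsZRenewal d n γ k) : LatStep d (wstep γ k) := by
  refine ⟨?_, wstep_height hk⟩
  have h1 := hγ.2.1 (k + 1) (by have := hk.1; omega)
  simpa [wstep, Pi.sub_apply] using h1

lemma shiftW_height (ht : ∀ k ∈ rf d n γ, t k 0 = 0) (m : ℕ) :
    shiftW d n γ t m 0 = γ m 0 := by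
  simp only [shiftW, Pi.add_apply, Finset.sum_apply, Pi.sub_apply]
  have : ∀ k ∈ (rf d n γ).filter (fun k => k + 2 ≤ m), t k 0 - wstep γ k 0 = 0 := by
    intro k hk
    have hk' := Finset.mem_of_mem_filter k hk
    rw [ht k hk', wstep_height (mem_rf.1 hk'), sub_self]
  rw [Finset.sum_congr rfl this, Finset.sum_const, smul_zero, add_zero]

lemma rf_shiftW (ht : ∀ k ∈ rf d n γ, t k 0 = 0) :
    rf d n (shiftW d n γ t) = rf d n γ := by
  ext k
  rw [mem_rf, mem_rf]
  exact isZR_of_heights (shiftW_height ht) k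

lemma shiftW_sub {i m : ℕ} (him : i ≤ m) :
    shiftW d n γ t m - shiftW d n γ t i = (γ m - γ i) +
      ∑ k ∈ (rf d n γ).filter (fun k => i < k + 2 ∧ k + 2 ≤ m), (t k - wstep γ k) := by
  have hsplit : (rf d n γ).filter (fun k => k + 2 ≤ m) =
      (rf d n γ).filter (fun k => k + 2 ≤ i) ∪
        (rf d n γ).filter (fun k => i < k + 2 ∧ k + 2 ≤ m) := by
    ext k
    simp only [Finset.mem_filter, Finset.mem_union]
    constructor
    · rintro ⟨h1, h2⟩
      rcases Nat.lt_or_ge i (k + 2) with h | h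
      · exact Or.inr ⟨h1, h, h2⟩
      · exact Or.inl ⟨h1, h⟩
    · rintro (⟨h1, h2⟩ | ⟨h1, h2, h3⟩)
      · exact ⟨h1, by omega⟩
      · exact ⟨h1, h3⟩
  have hdisj : Disjoint ((rf d n γ).filter (fun k => k + 2 ≤ i))
      ((rf d n γ).filter (fun k => i < k + 2 ∧ k + 2 ≤ m)) := by
    rw [Finset.disjoint_left]
    intro k h1 h2
    simp only [Finset.mem_filter] at h1 h2
    omega
  simp only [shiftW]
  rw [hsplit, Finset.sum_union hdisj]
  abel

lemma shiftW_step_ren {k : ℕ} (hk : k ∈ rf d n γ) :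
    shiftW d n γ t (k + 2) - shiftW d n γ t (k + 1) = t k := by
  rw [shiftW_sub (by omega)]
  have : (rf d n γ).filter (fun k' => k + 1 < k' + 2 ∧ k' + 2 ≤ k + 2) = {k} := by
    ext k'
    simp only [Finset.mem_filter, Finset.mem_singleton]
    constructor
    · rintro ⟨_, h2, h3⟩; omega
    · rintro rfl; exact ⟨hk, by omega, le_rfl⟩
  rw [this, Finset.sum_singleton, wstep]
  abel

lemma shiftW_step_none {i : ℕ} (hi : ∀ k ∈ rf d n γ, k + 2 ≠ i + 1) :
    shiftW d n γ t (i + 1) - shiftW d n γ t i = γ (i + 1) - γ i := by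
  rw [shiftW_sub (by omega)]
  have : (rf d n γ).filter (fun k => i < k + 2 ∧ k + 2 ≤ i + 1) = ∅ := by
    ext k
    simp only [Finset.mem_filter, Finset.notMem_empty, iff_false, not_and]
    intro hk h1 h2
    exact hi k hk (by omega)
  rw [this, Finset.sum_empty, add_zero]

lemma shiftW_zero : shiftW d n γ t 0 = γ 0 := by
  simp only [shiftW]
  have : (rf d n γ).filter (fun k => k + 2 ≤ 0) = ∅ := by
    ext k; simp
  rw [this, Finset.sum_empty, add_zero]

lemma shiftW_shiftW (ht : ∀ k ∈ rf d n γ, t k 0 = 0) :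
    shiftW d n (shiftW d n γ t) t' = shiftW d n γ t' := by
  funext m
  show shiftW d n γ t m + _ = _
  rw [rf_shiftW ht]
  have hw : ∀ k ∈ (rf d n γ).filter (fun k => k + 2 ≤ m),
      t' k - wstep (shiftW d n γ t) k = t' k - t k := by
    intro k hk
    have hk' := Finset.mem_of_mem_filter k hk
    have : wstep (shiftW d n γ t) k = t k := shiftW_step_ren hk'
    rw [this]
  rw [Finset.sum_congr rfl hw]
  simp only [shiftW]
  rw [add_assoc, ← Finset.sum_add_distrib]
  congr 1
  apply Finset.sum_congr rfl
  intro k _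
  abel

lemma shiftW_self (h : ∀ k ∈ rf d n γ, t k = wstep γ k) : shiftW d n γ t = γ := by
  funext m
  simp only [shiftW]
  have : ∀ k ∈ (rf d n γ).filter (fun k => k + 2 ≤ m), t k - wstep γ k = 0 := by
    intro k hk
    rw [h k (Finset.mem_of_mem_filter k hk), sub_self]
  rw [Finset.sum_congr rfl this, Finset.sum_const, smul_zero, add_zero]

lemma shiftW_congr {t t' : ℕ → Fin d → ℤ} (h : ∀ k ∈ rf d n γ, t k = t' k) :
    shiftW d n γ t = shiftW d n γ t' := by
  funext m
  simp only [shiftW]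
  congr 1
  apply Finset.sum_congr rfl
  intro k hk
  rw [h k (Finset.mem_of_mem_filter k hk)]

end basics

section membership

variable {d n M : ℕ} [NeZero d] {hgt : ℤ} {γ : ℕ → Fin d → ℤ} {t : ℕ → Fin d → ℤ}

lemma latstep_ne_zero {v : Fin d → ℤ} (hv : LatStep d v) : v ≠ 0 := by
  intro h
  have := hv.1
  rw [h] at this
  simp at this

lemma shiftW_inj_lt (hγ : γ ∈ BridgeSet d n M hgt)
    (ht : ∀ k ∈ rf d n γ, LatStep d (t k)) {i m : ℕ} (him : i < m) (hm : m ≤ n)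
    (heq : shiftW d n γ t i = shiftW d n γ t m) : False := by
  have ht0 : ∀ k ∈ rf d n γ, t k 0 = 0 := fun k hk => (ht k hk).2
  have hsub := shiftW_sub (d := d) (n := n) (γ := γ) (t := t) him.le
  rw [← heq, sub_self] at hsub
  rcases Finset.eq_empty_or_nonempty
      ((rf d n γ).filter (fun k => i < k + 2 ∧ k + 2 ≤ m)) with hS | ⟨k, hkS⟩
  · rw [hS, Finset.sum_empty, add_zero] at hsub
    have : γ m = γ i := by
      have := sub_eq_zero.mp hsub.symm
      exact this
    exact absurd (hγ.1.1.2.2 m hm i (by omega) this) (by omega)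
  · have hkrf := Finset.mem_of_mem_filter k hkS
    have hkZ := mem_rf.1 hkrf
    simp only [Finset.mem_filter] at hkS
    obtain ⟨_, hik, hkm⟩ := hkS
    -- heights are equal
    have hh : γ i 0 = γ m 0 := by
      have := congrFun heq 0
      rwa [shiftW_height ht0, shiftW_height ht0] at this
    have h1 : i = k + 1 := by
      by_contra hne
      have hi' : i < k + 1 := by omega
      have hlt1 : γ i 0 < γ (k + 1) 0 := hkZ.2.1 i hi'
      have hle2 : γ (k + 1) 0 ≤ γ m 0 := by
        rcases Nat.eq_or_lt_of_le hkm with h | h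
        · rw [← h]; exact le_of_eq hkZ.2.2.1
        · exact (hkZ.2.2.2 m h hm).le
      omega
    have h2 : m = k + 2 := by
      by_contra hne
      have hlt : k + 2 < m := by omega
      have := hkZ.2.2.2 m hlt hm
      have hle : γ i 0 ≤ γ (k + 1) 0 := by rw [h1]
      omega
    subst h1; subst h2
    have hsingle : (rf d n γ).filter (fun k' => k + 1 < k' + 2 ∧ k' + 2 ≤ k + 2) = {k} := by
      ext k'
      simp only [Finset.mem_filter, Finset.mem_singleton]
      constructor
      · rintro ⟨_, h2, h3⟩; omega
      · rintro rfl; exact ⟨hkrf, by omega, le_rfl⟩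
    rw [hsingle, Finset.sum_singleton, wstep] at hsub
    have : t k = 0 := by
      have : γ (k + 2) - γ (k + 1) + (t k - (γ (k + 2) - γ (k + 1))) = t k := by abel
      rw [this] at hsub
      exact hsub.symm
    exact latstep_ne_zero (ht k hkrf) this

lemma shiftW_mem (hγ : γ ∈ BridgeSet d n M hgt)
    (ht : ∀ k ∈ rf d n γ, LatStep d (t k)) :
    shiftW d n γ t ∈ BridgeSet d n M hgt := by
  have ht0 : ∀ k ∈ rf d n γ, t k 0 = 0 := fun k hk => (ht k hk).2
  obtain ⟨⟨⟨hz, hstep, hinj⟩, hbr⟩, hM, hhgt, hfroz⟩ := hγ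
  have hsaw : IsSAW d n γ := ⟨hz, hstep, hinj⟩
  have hB : γ ∈ BridgeSet d n M hgt := ⟨⟨hsaw, hbr⟩, hM, hhgt, hfroz⟩
  refine ⟨⟨⟨?_, ?_, ?_⟩, ?_⟩, ?_, ?_, ?_⟩
  · rw [shiftW_zero, hz]
  · intro i hi
    by_cases hex : ∃ k ∈ rf d n γ, k + 2 = i + 1
    · obtain ⟨k, hk, he⟩ := hex
      have hik : i = k + 1 := by omega
      subst hik
      have hs := shiftW_step_ren (d := d) (n := n) (γ := γ) (t := t) hk
      have : ∀ j, shiftW d n γ t (k + 1 + 1) j - shiftW d n γ t (k + 1) j = t k j := by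
        intro j
        have := congrFun hs j
        simpa using this
      calc ∑ j, |shiftW d n γ t (k + 1 + 1) j - shiftW d n γ t (k + 1) j|
          = ∑ j, |t k j| := by
            apply Finset.sum_congr rfl; intro j _; rw [this j]
        _ = 1 := (ht k hk).1
    · push_neg at hex
      have hs := shiftW_step_none (d := d) (n := n) (γ := γ) (t := t) hex
      have heq : ∀ j, shiftW d n γ t (i + 1) j - shiftW d n γ t i j = γ (i + 1) j - γ i j := by
        intro j
        have := congrFun hs j
        simpa using this
      calc ∑ j, |shiftW d n γ t (i + 1) j - shiftW d n γ t i j|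
          = ∑ j, |γ (i + 1) j - γ i j| := by
            apply Finset.sum_congr rfl; intro j _; rw [heq j]
        _ = 1 := hstep i hi
  · intro i hi k hk heq
    rcases lt_trichotomy i k with h | h | h
    · exact absurd heq (fun he => shiftW_inj_lt hB ht h hk he)
    · exact h
    · exact absurd heq.symm (fun he => shiftW_inj_lt hB ht h hi he)
  · intro kk hkk1 hkk2
    rw [shiftW_height ht0, shiftW_height ht0]
    exact hbr kk hkk1 hkk2
  · have : zRenCount d n (shiftW d n γ t) = zRenCount d n γ := by
      rw [zRenCount_eq_card_rf, zRenCount_eq_card_rf, rf_shiftW ht0]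
    omega
  · rw [shiftW_height ht0]; exact hhgt
  · intro i hi
    have hfi : (rf d n γ).filter (fun k => k + 2 ≤ i) = rf d n γ := by
      apply Finset.filter_true_of_mem
      intro k hk
      have := (mem_rf.1 hk).1
      omega
    have hfn : (rf d n γ).filter (fun k => k + 2 ≤ n) = rf d n γ := by
      apply Finset.filter_true_of_mem
      intro k hk
      exact (mem_rf.1 hk).1
    simp only [shiftW, hfi, hfn, hfroz i hi]

end membership

/-! ### Lateral unit vectors -/

/-- Explicit enumeration of lateral unit vectors. -/
def latDec (d : ℕ) (b : Bool) (i : Fin (d - 1)) : Fin d → ℤ :=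
  fun m => if (m : ℕ) = (i : ℕ) + 1 then (if b then 1 else -1) else 0

section lateral

variable {d : ℕ} [NeZero d]

lemma unit_decomp {v : Fin d → ℤ} (h : ∑ j, |v j| = 1) :
    ∃ j, |v j| = 1 ∧ ∀ i, i ≠ j → v i = 0 := by
  obtain ⟨j, -, hj⟩ := Finset.exists_ne_zero_of_sum_ne_zero (s := Finset.univ)
    (f := fun j => |v j|) (by rw [h]; norm_num)
  have hj1 : 1 ≤ |v j| := Int.one_le_abs (by simpa using hj)
  have hsplit : |v j| + ∑ i ∈ Finset.univ.erase j, |v i| = 1 := by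
    rw [← h]; exact Finset.add_sum_erase Finset.univ (fun i => |v i|) (Finset.mem_univ j)
  have hnonneg : ∀ i ∈ Finset.univ.erase j, 0 ≤ |v i| := fun i _ => abs_nonneg _
  have hrest : ∑ i ∈ Finset.univ.erase j, |v i| = 0 := by
    have h0 : 0 ≤ ∑ i ∈ Finset.univ.erase j, |v i| := Finset.sum_nonneg hnonneg
    omega
  refine ⟨j, by omega, ?_⟩
  intro i hi
  have := (Finset.sum_eq_zero_iff_of_nonneg hnonneg).1 hrest i
    (Finset.mem_erase.2 ⟨hi, Finset.mem_univ i⟩)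
  exact abs_eq_zero.1 this

lemma latDec_latstep (b : Bool) (i : Fin (d - 1)) : LatStep d (latDec d b i) := by
  have hi : (i : ℕ) + 1 < d := by have := i.2; omega
  constructor
  · have : ∀ j : Fin d, |latDec d b i j| = if j = (⟨(i : ℕ) + 1, hi⟩ : Fin d) then 1 else 0 := by
      intro j
      simp only [latDec, Fin.ext_iff]
      by_cases hj : (j : ℕ) = (i : ℕ) + 1 <;> simp [hj] <;> cases b <;> norm_num
    rw [Finset.sum_congr rfl (fun j _ => this j), Finset.sum_ite_eq' Finset.univ]
    simp
  · simp only [latDec]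
    have : ((0 : Fin d) : ℕ) = 0 := rfl
    rw [this]
    simp

lemma latDec_injective : Function.Injective
    (fun p : Bool × Fin (d - 1) => (⟨latDec d p.1 p.2, latDec_latstep p.1 p.2⟩ :
      {v : Fin d → ℤ // LatStep d v})) := by
  rintro ⟨b, i⟩ ⟨b', i'⟩ h
  simp only [Subtype.mk.injEq] at h
  have hi : (i : ℕ) + 1 < d := by have := i.2; omega
  have hval := congrFun h (⟨(i : ℕ) + 1, hi⟩ : Fin d)
  simp only [latDec] at hval
  rcases eq_or_ne (i : ℕ) (i' : ℕ) with hii | hii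
  · have hie : i = i' := Fin.ext hii
    subst hie
    have hb : b = b' := by cases b <;> cases b' <;> simp_all
    subst hb; rfl
  · exfalso
    rw [if_neg (show ¬(((⟨(i : ℕ) + 1, hi⟩ : Fin d) : ℕ) = (i' : ℕ) + 1) from by
      simp only [Fin.val_mk]; omega)] at hval
    rw [if_pos trivial] at hval
    cases b <;> simp_all

lemma latDec_surjective :
    Function.Surjective
    (fun p : Bool × Fin (d - 1) => (⟨latDec d p.1 p.2, latDec_latstep p.1 p.2⟩ :
      {v : Fin d → ℤ // LatStep d v})) := by
  rintro ⟨v, hv1, hv2⟩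
  obtain ⟨j, hj1, hj2⟩ := unit_decomp hv1
  have hj0 : (j : ℕ) ≠ 0 := by
    intro h0
    have : j = 0 := Fin.ext h0
    rw [this, hv2] at hj1
    norm_num at hj1
  have hjd : (j : ℕ) - 1 < d - 1 := by have := j.2; omega
  refine ⟨⟨(v j = 1 : Bool), ⟨(j : ℕ) - 1, hjd⟩⟩, ?_⟩
  apply Subtype.ext
  funext m
  simp only [latDec]
  by_cases hm : (m : ℕ) = (j : ℕ) - 1 + 1
  · have hmj : m = j := Fin.ext (by omega)
    rw [if_pos hm, hmj]
    rcases abs_eq (by norm_num : (0:ℤ) ≤ 1) |>.1 hj1 with h1 | h1 <;> simp [h1]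
  · rw [if_neg hm]
    exact (hj2 m (fun he => hm (by rw [he]; omega))).symm

/-- Equivalence between `Bool × Fin (d-1)` and lateral unit vectors. -/
noncomputable def latEquiv : Bool × Fin (d - 1) ≃ {v : Fin d → ℤ // LatStep d v} :=
  Equiv.ofBijective _ ⟨latDec_injective, latDec_surjective⟩

lemma card_latstep : Nat.card {v : Fin d → ℤ // LatStep d v} = 2 * (d - 1) := by
  rw [← Nat.card_congr latEquiv, Nat.card_prod]
  simp [Nat.card_eq_fintype_card]

lemma sum_latDec (b : Bool) (i : Fin (d - 1)) :
    ∑ j, latDec d b i j = if b then 1 else -1 := by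
  have hi : (i : ℕ) + 1 < d := by have := i.2; omega
  have : ∀ j : Fin d, latDec d b i j =
      if j = (⟨(i : ℕ) + 1, hi⟩ : Fin d) then (if b then (1:ℤ) else -1) else 0 := by
    intro j
    simp only [latDec, Fin.ext_iff]
  rw [Finset.sum_congr rfl (fun j _ => this j), Finset.sum_ite_eq' Finset.univ]
  simp

end lateral

/-! ### Finiteness of the bridge set -/

section finite

variable {d n M : ℕ} [NeZero d] {hgt : ℤ}

lemma saw_bound {γ : ℕ → Fin d → ℤ} (hγ : IsSAW d n γ) :
    ∀ i, i ≤ n → ∀ j, |γ i j| ≤ (i : ℤ) := by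
  intro i
  induction i with
  | zero =>
    intro _ j
    rw [show γ 0 j = 0 from congrFun hγ.1 j]
    simp
  | succ i ih =>
    intro hi j
    have h1 := ih (by omega) j
    have h2 : |γ (i + 1) j - γ i j| ≤ 1 := by
      calc |γ (i + 1) j - γ i j| ≤ ∑ j', |γ (i + 1) j' - γ i j'| :=
            Finset.single_le_sum (f := fun j' => |γ (i + 1) j' - γ i j'|)
              (fun _ _ => abs_nonneg _) (Finset.mem_univ j)
        _ = 1 := hγ.2.1 i (by omega)
    calc |γ (i + 1) j| = |γ i j + (γ (i + 1) j - γ i j)| := by ring_nf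
      _ ≤ |γ i j| + |γ (i + 1) j - γ i j| := abs_add_le _ _
      _ ≤ (i : ℤ) + 1 := by omega
      _ = ((i + 1 : ℕ) : ℤ) := by push_cast; ring

lemma bridgeSet_finite : (BridgeSet d n M hgt).Finite := by
  rw [← Set.finite_coe_iff]
  have hf : ∀ γ : ↥(BridgeSet d n M hgt), ∀ i : Fin (n + 1), ∀ j : Fin d,
      γ.val (i : ℕ) j ∈ Finset.Icc (-(n : ℤ)) (n : ℤ) := by
    rintro ⟨γ, hγ⟩ i j
    have := saw_bound hγ.1.1 (i : ℕ) (by omega) j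
    rw [Finset.mem_Icc]
    have : |γ (i : ℕ) j| ≤ (n : ℤ) := le_trans this (by exact_mod_cast Nat.le_of_lt_succ i.2)
    rw [abs_le] at this
    exact this
  let f : ↥(BridgeSet d n M hgt) → (Fin (n + 1) → Fin d → ↥(Finset.Icc (-(n : ℤ)) (n : ℤ))) :=
    fun γ i j => ⟨γ.val (i : ℕ) j, hf γ i j⟩
  have hinj : Function.Injective f := by
    rintro ⟨γ, hγ⟩ ⟨γ', hγ'⟩ heq
    have hval : ∀ i : ℕ, i ≤ n → γ i = γ' i := by
      intro i hi
      funext j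
      have := congrFun (congrFun heq (⟨i, by omega⟩ : Fin (n + 1))) j
      exact congrArg Subtype.val this
    apply Subtype.ext
    show γ = γ'
    funext m j
    rcases le_or_gt m n with hm | hm
    · rw [hval m hm]
    · rw [hγ.2.2.2 m hm.le, hγ'.2.2.2 m hm.le, hval n le_rfl]
  exact Finite.of_injective f hinj

end finite

/-! ### Binomial coefficient estimates -/

lemma choose_succ_middle (R : ℕ) : (R + 1).choose ((R + 1) / 2) ≤ 2 * R.choose (R / 2) := by
  rcases h : (R + 1) / 2 with _ | k
  · have hR : R = 0 := by omega
    subst hR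
    simp
  · rw [Nat.choose_succ_succ]
    have h1 := Nat.choose_le_middle k R
    have h2 := Nat.choose_le_middle k.succ R
    omega

lemma choose_middle_mono {M R : ℕ} (h : M ≤ R) :
    R.choose (R / 2) * 2 ^ M ≤ M.choose (M / 2) * 2 ^ R := by
  induction R, h using Nat.le_induction with
  | base => rfl
  | succ R hMR ih =>
    calc (R + 1).choose ((R + 1) / 2) * 2 ^ M ≤ 2 * R.choose (R / 2) * 2 ^ M := by
          have := choose_succ_middle R
          exact Nat.mul_le_mul_right _ this
      _ = 2 * (R.choose (R / 2) * 2 ^ M) := by ring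
      _ ≤ 2 * (M.choose (M / 2) * 2 ^ R) := Nat.mul_le_mul_left _ ih
      _ = M.choose (M / 2) * 2 ^ (R + 1) := by ring

lemma centralBinom_sqrt_le : ∀ r : ℕ,
    (Nat.centralBinom r : ℝ) * Real.sqrt (2 * r + 1) ≤ 4 ^ r := by
  intro r
  induction r with
  | zero => simp [Nat.centralBinom]
  | succ r ih =>
    have hb : ((r : ℝ) + 1) * (Nat.centralBinom (r + 1) : ℝ) =
        2 * (2 * r + 1) * (Nat.centralBinom r : ℝ) := by
      have := Nat.succ_mul_centralBinom_succ r
      exact_mod_cast congrArg (fun x : ℕ => (x : ℝ)) this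
    set a := Real.sqrt (2 * (r : ℝ) + 1) with ha
    set b := Real.sqrt (2 * ((r : ℝ) + 1) + 1) with hbdef
    have ha0 : 0 ≤ a := Real.sqrt_nonneg _
    have hb0 : 0 ≤ b := Real.sqrt_nonneg _
    have ha2 : a ^ 2 = 2 * (r : ℝ) + 1 := Real.sq_sqrt (by positivity)
    have hb2 : b ^ 2 = 2 * ((r : ℝ) + 1) + 1 := Real.sq_sqrt (by positivity)
    have key : 2 * (2 * (r : ℝ) + 1) * b ≤ 4 * ((r : ℝ) + 1) * a := by
      apply le_of_pow_le_pow_left₀ (n := 2) two_ne_zero (by positivity)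
      have h1 : (2 * (2 * (r : ℝ) + 1) * b) ^ 2 = (2 * (2 * (r : ℝ) + 1)) ^ 2 * b ^ 2 := by ring
      have h2 : (4 * ((r : ℝ) + 1) * a) ^ 2 = (4 * ((r : ℝ) + 1)) ^ 2 * a ^ 2 := by ring
      rw [h1, h2, ha2, hb2]
      nlinarith [sq_nonneg ((r : ℝ) + 1)]
    have hcb0 : (0 : ℝ) ≤ (Nat.centralBinom r : ℝ) := by positivity
    have hchain : ((r : ℝ) + 1) * ((Nat.centralBinom (r + 1) : ℝ) * b) ≤
        ((r : ℝ) + 1) * 4 ^ (r + 1) := by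
      calc ((r : ℝ) + 1) * ((Nat.centralBinom (r + 1) : ℝ) * b)
          = (2 * (2 * r + 1) * (Nat.centralBinom r : ℝ)) * b := by rw [← hb]; ring
        _ = (Nat.centralBinom r : ℝ) * (2 * (2 * (r : ℝ) + 1) * b) := by ring
        _ ≤ (Nat.centralBinom r : ℝ) * (4 * ((r : ℝ) + 1) * a) := by
            apply mul_le_mul_of_nonneg_left key hcb0
        _ = 4 * ((r : ℝ) + 1) * ((Nat.centralBinom r : ℝ) * a) := by ring
        _ ≤ 4 * ((r : ℝ) + 1) * 4 ^ r := by
            apply mul_le_mul_of_nonneg_left ih (by positivity)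
        _ = ((r : ℝ) + 1) * 4 ^ (r + 1) := by ring
    have hpos : (0 : ℝ) < (r : ℝ) + 1 := by positivity
    have := (mul_le_mul_iff_right₀ hpos).mp hchain
    calc (Nat.centralBinom (r + 1) : ℝ) * Real.sqrt (2 * ((r : ℕ) + 1 : ℕ) + 1)
        = (Nat.centralBinom (r + 1) : ℝ) * b := by
          rw [hbdef]; norm_num
      _ ≤ 4 ^ (r + 1) := this

lemma centralBinom_eq_choose (r : ℕ) : Nat.centralBinom r = (2 * r).choose r := rfl

/-! ### Counting functions into lateral vectors with fixed sum -/

lemma sum_pm {K : Type} [Fintype K] (P : K → Prop) [DecidablePred P] :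
    ∑ k, (if P k then (1 : ℤ) else -1) =
      2 * ((Finset.univ.filter P).card : ℤ) - Fintype.card K := by
  rw [Finset.sum_ite, Finset.sum_const, Finset.sum_const]
  have h := Finset.card_filter_add_card_filter_not (s := (Finset.univ : Finset K)) P
  rw [Finset.card_univ] at h
  simp only [nsmul_eq_mul, mul_one, mul_neg_one]
  have h2 : ((Finset.univ.filter P).card : ℤ) + ((Finset.univ.filter (fun a => ¬P a)).card : ℤ)
      = (Fintype.card K : ℤ) := by exact_mod_cast h
  linarith

lemma card_finsets_with (K : Type) [Fintype K] (C : ℤ) :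
    Nat.card {T : Finset K // 2 * (T.card : ℤ) = C} ≤
      (Fintype.card K).choose (Fintype.card K / 2) := by
  rcases isEmpty_or_nonempty {T : Finset K // 2 * (T.card : ℤ) = C} with he | ⟨⟨T₀, hT₀⟩⟩
  · rw [Nat.card_of_isEmpty]
    exact Nat.zero_le _
  · have hall : ∀ T : {T : Finset K // 2 * (T.card : ℤ) = C}, T.val.card = T₀.card := by
      rintro ⟨T, hT⟩
      have := hT.trans hT₀.symm
      show T.card = T₀.card
      omega
    have hinj : Function.Injective
        (fun T : {T : Finset K // 2 * (T.card : ℤ) = C} =>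
          (⟨T.val, hall T⟩ : {T : Finset K // T.card = T₀.card})) := by
      rintro ⟨T, hT⟩ ⟨T', hT'⟩ h
      simp only [Subtype.mk.injEq] at h
      exact Subtype.ext h
    calc Nat.card {T : Finset K // 2 * (T.card : ℤ) = C}
        ≤ Nat.card {T : Finset K // T.card = T₀.card} :=
          Nat.card_le_card_of_injective _ hinj
      _ = (Fintype.card K).choose T₀.card := by
          rw [Nat.card_eq_fintype_card, Fintype.card_finset_len]
      _ ≤ (Fintype.card K).choose (Fintype.card K / 2) := Nat.choose_le_middle _ _

lemma fiber_bound {d : ℕ} [NeZero d] (K : Type) [Fintype K] (v : Fin d → ℤ) :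
    Nat.card {s : K → {v' : Fin d → ℤ // LatStep d v'} // (∑ k, (s k).val) = v}
      ≤ (Fintype.card K).choose (Fintype.card K / 2) * (d - 1) ^ (Fintype.card K) := by
  set C : ℤ := (Fintype.card K : ℤ) + ∑ j, v j with hC
  let Tgt := {T : Finset K // 2 * (T.card : ℤ) = C} × (K → Fin (d - 1))
  let G : {s : K → {v' : Fin d → ℤ // LatStep d v'} // (∑ k, (s k).val) = v} → Tgt :=
    fun s => ⟨⟨Finset.univ.filter (fun k => ((latEquiv.symm (s.val k)).1 : Bool) = true), by
      -- the cardinality condition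
      have hkey : ∀ k : K, (s.val k).val = latDec d (latEquiv.symm (s.val k)).1
          (latEquiv.symm (s.val k)).2 := by
        intro k
        have := latEquiv.apply_symm_apply (s.val k)
        conv_lhs => rw [← this]
        rfl
      have hsum1 : ∀ k : K, ∑ j, (s.val k).val j =
          if ((latEquiv.symm (s.val k)).1 : Bool) = true then (1 : ℤ) else -1 := by
        intro k
        rw [hkey k]
        rcases (latEquiv.symm (s.val k)).1 with _ | _ <;>
          simp [sum_latDec]
      have hsum2 : ∑ k, ∑ j, (s.val k).val j = ∑ j, v j := by
        rw [Finset.sum_comm]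
        apply Finset.sum_congr rfl
        intro j _
        have := congrFun s.prop j
        rw [Finset.sum_apply] at this
        exact this
      rw [Finset.sum_congr rfl (fun k _ => hsum1 k)] at hsum2
      rw [sum_pm (fun k => ((latEquiv.symm (s.val k)).1 : Bool) = true)] at hsum2
      omega⟩,
      fun k => (latEquiv.symm (s.val k)).2⟩
  have hGinj : Function.Injective G := by
    rintro s s' h
    have h1 := congrArg (fun p : Tgt => p.1.val) h
    have h2 := congrArg (fun p : Tgt => p.2) h
    simp only [G] at h1 h2
    apply Subtype.ext
    funext k
    apply latEquiv.symm.injective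
    apply Prod.ext
    · have hmem := congrArg (fun T : Finset K => k ∈ T) h1
      simp only [Finset.mem_filter, Finset.mem_univ, true_and, eq_iff_iff] at hmem
      rcases hb : ((latEquiv.symm (s.val k)).1 : Bool) with _ | _ <;>
        rcases hb' : ((latEquiv.symm (s'.val k)).1 : Bool) with _ | _ <;> simp_all
    · exact congrFun h2 k
  calc Nat.card {s : K → {v' : Fin d → ℤ // LatStep d v'} // (∑ k, (s k).val) = v}
      ≤ Nat.card Tgt := Nat.card_le_card_of_injective G hGinj
    _ = Nat.card {T : Finset K // 2 * (T.card : ℤ) = C} * Nat.card (K → Fin (d - 1)) :=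
        Nat.card_prod _ _
    _ ≤ (Fintype.card K).choose (Fintype.card K / 2) * (d - 1) ^ (Fintype.card K) := by
        apply Nat.mul_le_mul (card_finsets_with K C)
        rw [Nat.card_eq_fintype_card, Fintype.card_fun, Fintype.card_fin]

/-! ### Orbit decomposition -/

/-- A fixed lateral unit vector (the direction `e₂`). -/
def e2v (d : ℕ) (hd : 2 ≤ d) : Fin d → ℤ := latDec d true ⟨0, by omega⟩

section orbits

variable {d n M : ℕ} [NeZero d] {hgt : ℤ} (hd : 2 ≤ d)

lemma e2v_lat [NeZero d] : LatStep d (e2v d hd) := latDec_latstep _ _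

lemma reconstruct {γ β : ℕ → Fin d → ℤ}
    (hγψ : shiftW d n γ (fun _ => e2v d hd) = β) :
    γ = shiftW d n β (fun k => if k ∈ rf d n γ then wstep γ k else e2v d hd) := by
  have h1 : shiftW d n (shiftW d n γ (fun _ => e2v d hd))
      (fun k => if k ∈ rf d n γ then wstep γ k else e2v d hd) =
      shiftW d n γ (fun k => if k ∈ rf d n γ then wstep γ k else e2v d hd) :=
    shiftW_shiftW (fun k _ => (e2v_lat hd).2)
  rw [hγψ] at h1
  rw [h1, shiftW_self]
  intro k hk
  rw [if_pos hk]

lemma rf_of_psi_eq {γ β : ℕ → Fin d → ℤ}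
    (hγψ : shiftW d n γ (fun _ => e2v d hd) = β) : rf d n γ = rf d n β := by
  rw [← hγψ, rf_shiftW (fun k _ => (e2v_lat hd).2)]

lemma wstep_of_fix {β : ℕ → Fin d → ℤ}
    (hβfix : shiftW d n β (fun _ => e2v d hd) = β) {k : ℕ} (hk : k ∈ rf d n β) :
    wstep β k = e2v d hd := by
  conv_lhs => rw [← hβfix]
  exact shiftW_step_ren hk

lemma orbit_card (hfin : (BridgeSet d n M hgt).Finite) {β : ℕ → Fin d → ℤ}
    (hβ : β ∈ BridgeSet d n M hgt)
    (hβfix : shiftW d n β (fun _ => e2v d hd) = β) :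
    (hfin.toFinset.filter (fun γ => shiftW d n γ (fun _ => e2v d hd) = β)).card
      = (2 * (d - 1)) ^ ((rf d n β).card) := by
  haveI : Fintype {v : Fin d → ℤ // LatStep d v} := Fintype.ofEquiv _ latEquiv
  set K := {k // k ∈ rf d n β} with hK
  set E := {v : Fin d → ℤ // LatStep d v} with hE
  set Fb := hfin.toFinset.filter (fun γ => shiftW d n γ (fun _ => e2v d hd) = β) with hFb
  have hmem : ∀ γ ∈ Fb, γ ∈ BridgeSet d n M hgt ∧ shiftW d n γ (fun _ => e2v d hd) = β := by
    intro γ hγ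
    rw [hFb, Finset.mem_filter, Set.Finite.mem_toFinset] at hγ
    exact hγ
  have hwlat : ∀ γ ∈ Fb, ∀ k : K, LatStep d (wstep γ (k : ℕ)) := by
    intro γ hγ k
    obtain ⟨hγB, hγψ⟩ := hmem γ hγ
    have hk : (k : ℕ) ∈ rf d n γ := by
      rw [rf_of_psi_eq hd hγψ]; exact k.2
    exact wstep_lat hγB.1.1 (mem_rf.1 hk)
  have hcard : Fb.card = (Finset.univ : Finset (K → E)).card := by
    refine Finset.card_bij'
      (fun γ hγ => fun (k : K) => (⟨wstep γ k.val, hwlat γ hγ k⟩ : E))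
      (fun s _ => shiftW d n β (fun k => if h : k ∈ rf d n β then (s ⟨k, h⟩).val
        else e2v d hd)) (fun γ hγ => Finset.mem_univ _) ?hj ?left ?right
    case hj =>
      intro s _
      have htlat : ∀ k ∈ rf d n β,
          LatStep d (if h : k ∈ rf d n β then (s ⟨k, h⟩).val else e2v d hd) := by
        intro k hk
        rw [dif_pos hk]
        exact (s ⟨k, hk⟩).2
      have ht0 : ∀ k ∈ rf d n β,
          (if h : k ∈ rf d n β then (s ⟨k, h⟩).val else e2v d hd) 0 = 0 := by
        intro k hk
        exact (htlat k hk).2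
      rw [hFb, Finset.mem_filter, Set.Finite.mem_toFinset]
      constructor
      · exact shiftW_mem hβ htlat
      · rw [shiftW_shiftW ht0, hβfix]
    case left =>
      intro γ hγ
      obtain ⟨hγB, hγψ⟩ := hmem γ hγ
      have hrec := reconstruct hd hγψ
      have hrfeq : rf d n γ = rf d n β := rf_of_psi_eq hd hγψ
      rw [eq_comm]
      conv_lhs => rw [hrec]
      apply shiftW_congr
      intro k hk
      rw [dif_pos hk, if_pos (by rw [hrfeq]; exact hk)]
    case right =>
      intro s _
      funext k
      apply Subtype.ext
      show wstep (shiftW d n β _) (k : ℕ) = (s k).val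
      rw [show (wstep (shiftW d n β (fun k' => if h : k' ∈ rf d n β then (s ⟨k', h⟩).val
          else e2v d hd)) (k : ℕ)) = _ from shiftW_step_ren k.2]
      rw [dif_pos k.2]
  rw [hcard, Finset.card_univ, Fintype.card_fun]
  have h1 : Fintype.card E = 2 * (d - 1) := by
    rw [← Fintype.card_congr (latEquiv (d := d))]
    simp
  have h2 : Fintype.card K = (rf d n β).card := Fintype.card_coe _
  rw [h1, h2]

lemma orbit_x_card (hfin : (BridgeSet d n M hgt).Finite) {β : ℕ → Fin d → ℤ}
    (hβ : β ∈ BridgeSet d n M hgt)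
    (hβfix : shiftW d n β (fun _ => e2v d hd) = β) (x : Fin d → ℤ) :
    ((hfin.toFinset.filter (fun γ => γ n = x)).filter
        (fun γ => shiftW d n γ (fun _ => e2v d hd) = β)).card
      ≤ Nat.choose ((rf d n β).card) ((rf d n β).card / 2)
          * (d - 1) ^ ((rf d n β).card) := by
  haveI : Fintype {v : Fin d → ℤ // LatStep d v} := Fintype.ofEquiv _ latEquiv
  set K := {k // k ∈ rf d n β} with hK
  set E := {v : Fin d → ℤ // LatStep d v} with hE
  set vβ : Fin d → ℤ := x - β n + ((rf d n β).card) • e2v d hd with hvβ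
  set Fbx := (hfin.toFinset.filter (fun γ => γ n = x)).filter
      (fun γ => shiftW d n γ (fun _ => e2v d hd) = β) with hFbx
  have hmem : ∀ γ ∈ Fbx, γ ∈ BridgeSet d n M hgt ∧ γ n = x ∧
      shiftW d n γ (fun _ => e2v d hd) = β := by
    intro γ hγ
    rw [hFbx, Finset.mem_filter, Finset.mem_filter, Set.Finite.mem_toFinset] at hγ
    exact ⟨hγ.1.1, hγ.1.2, hγ.2⟩
  have hwlat : ∀ γ ∈ Fbx, ∀ k : K, LatStep d (wstep γ (k : ℕ)) := by
    intro γ hγ k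
    obtain ⟨hγB, _, hγψ⟩ := hmem γ hγ
    have hk : (k : ℕ) ∈ rf d n γ := by
      rw [rf_of_psi_eq hd hγψ]; exact k.2
    exact wstep_lat hγB.1.1 (mem_rf.1 hk)
  -- the sum of the renewal steps of any γ in the fiber is vβ
  have hsum : ∀ γ ∈ Fbx, ∑ k ∈ rf d n β, wstep γ k = vβ := by
    intro γ hγ
    obtain ⟨hγB, hγx, hγψ⟩ := hmem γ hγ
    have hrec := reconstruct hd hγψ
    have hrfeq : rf d n γ = rf d n β := rf_of_psi_eq hd hγψ
    have hfull : (rf d n β).filter (fun k => k + 2 ≤ n) = rf d n β :=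
      Finset.filter_true_of_mem (fun k hk => (mem_rf.1 hk).1)
    have hγn : γ n = β n + ∑ k ∈ rf d n β,
        ((if k ∈ rf d n γ then wstep γ k else e2v d hd) - wstep β k) := by
      conv_lhs => rw [hrec]
      show β n + _ = β n + _
      rw [hfull]
    have hterm : ∀ k ∈ rf d n β,
        ((if k ∈ rf d n γ then wstep γ k else e2v d hd) - wstep β k)
          = wstep γ k - e2v d hd := by
      intro k hk
      rw [if_pos (by rw [hrfeq]; exact hk), wstep_of_fix hd hβfix hk]
    rw [Finset.sum_congr rfl hterm, Finset.sum_sub_distrib, Finset.sum_const] at hγn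
    rw [hγx] at hγn
    rw [hvβ]
    have : x - β n = ∑ k ∈ rf d n β, wstep γ k - (rf d n β).card • e2v d hd := by
      rw [hγn]; abel
    rw [this]; abel
  -- inject the fiber into the functions with fixed sum
  have hinjcard : Fbx.card ≤ Nat.card {s : K → E // (∑ k, (s k).val) = vβ} := by
    have hmap : ∀ γ : ↥Fbx, (∑ k : K, wstep γ.val (k : ℕ)) = vβ := by
      intro γ
      rw [Finset.sum_coe_sort (rf d n β) (wstep γ.val)]
      exact hsum γ.val γ.2
    let m : ↥Fbx → {s : K → E // (∑ k, (s k).val) = vβ} :=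
      fun γ => ⟨fun k => ⟨wstep γ.val (k : ℕ), hwlat γ.val γ.2 k⟩, hmap γ⟩
    have hm : Function.Injective m := by
      rintro ⟨γ, hγ⟩ ⟨γ', hγ'⟩ h
      have hws : ∀ k ∈ rf d n β, wstep γ k = wstep γ' k := by
        intro k hk
        have := congrFun (congrArg Subtype.val h) ⟨k, hk⟩
        exact congrArg Subtype.val this
      obtain ⟨hγB, _, hγψ⟩ := hmem γ hγ
      obtain ⟨hγB', _, hγψ'⟩ := hmem γ' hγ'
      have h1 := reconstruct hd hγψ
      have h2 := reconstruct hd hγψ'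
      have hrfeq : rf d n γ = rf d n β := rf_of_psi_eq hd hγψ
      have hrfeq' : rf d n γ' = rf d n β := rf_of_psi_eq hd hγψ'
      apply Subtype.ext
      show γ = γ'
      rw [h1, h2]
      apply shiftW_congr
      intro k hk
      rw [if_pos (by rw [hrfeq]; exact hk), if_pos (by rw [hrfeq']; exact hk)]
      exact hws k hk
    calc Fbx.card = Nat.card ↥Fbx := by
          rw [Nat.card_eq_fintype_card, Fintype.card_coe]
      _ ≤ Nat.card {s : K → E // (∑ k, (s k).val) = vβ} :=
          Nat.card_le_card_of_injective m hm
  calc Fbx.card ≤ Nat.card {s : K → E // (∑ k, (s k).val) = vβ} := hinjcard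
    _ ≤ (Fintype.card K).choose (Fintype.card K / 2) * (d - 1) ^ (Fintype.card K) :=
        fiber_bound K vβ
    _ = Nat.choose ((rf d n β).card) ((rf d n β).card / 2) * (d - 1) ^ ((rf d n β).card) := by
        rw [Fintype.card_coe]

end orbits

/-- Proposition prop:Mvariation: for every ε > 0 there is M such that, uniformly in
n, the height h > 0 and x ∈ ℤ^d, the proportion of bridges of length n with at least
M z-renewal times and endpoint height h that end exactly at x is at most ε. -/
theorem stmt_14 (d : ℕ) (hd : 2 ≤ d) [NeZero d] (ε : ℝ) (hε : 0 < ε) :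
    ∃ M : ℕ, ∀ n : ℕ, 0 < n → ∀ hgt : ℤ, 0 < hgt → ∀ x : Fin d → ℤ,
      (Nat.card {γ : ℕ → Fin d → ℤ // γ ∈ BridgeSet d n M hgt ∧ γ n = x} : ℝ)
        ≤ ε * (Nat.card ↥(BridgeSet d n M hgt) : ℝ) := by
  classical
  obtain ⟨r, hr⟩ := exists_nat_ge (ε⁻¹ ^ 2)
  refine ⟨2 * r, ?_⟩
  intro n hn hgt hhgt x
  set M := 2 * r with hM
  -- Step 1: the central binomial bound  choose M (M/2) ≤ ε 2^M
  have hMhalf : M / 2 = r := by omega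
  have hcbM : (Nat.choose M (M / 2) : ℝ) ≤ ε * 2 ^ M := by
    rw [hMhalf]
    have h1 := centralBinom_sqrt_le r
    rw [centralBinom_eq_choose] at h1
    have hsq : (1 : ℝ) / ε ≤ Real.sqrt (2 * r + 1) := by
      rw [Real.le_sqrt (by positivity) (by positivity)]
      have : ((1 : ℝ) / ε) ^ 2 = ε⁻¹ ^ 2 := by rw [one_div]
      rw [this]
      calc (ε⁻¹ : ℝ) ^ 2 ≤ (r : ℝ) := hr
        _ ≤ 2 * r + 1 := by
            have : (0 : ℝ) ≤ (r : ℝ) := Nat.cast_nonneg r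
            linarith
    have h2 : (Nat.choose (2 * r) r : ℝ) * (1 / ε) ≤ 4 ^ r :=
      le_trans (mul_le_mul_of_nonneg_left hsq (Nat.cast_nonneg _)) h1
    have h3 : (Nat.choose (2 * r) r : ℝ) ≤ 4 ^ r * ε := by
      have h4 := mul_le_mul_of_nonneg_right h2 hε.le
      rw [mul_assoc, one_div, inv_mul_cancel₀ hε.ne', mul_one] at h4
      exact h4
    calc (Nat.choose (2 * r) r : ℝ) ≤ 4 ^ r * ε := h3
      _ = ε * 2 ^ M := by
          rw [hM, show (4 : ℝ) = 2 ^ 2 by norm_num, ← pow_mul]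
          ring
  -- Step 2: for every R ≥ M, choose R (R/2) * (d-1)^R ≤ ε * (2(d-1))^R
  have hRbound : ∀ R : ℕ, M ≤ R →
      (Nat.choose R (R / 2) : ℝ) * ((d - 1 : ℕ) : ℝ) ^ R ≤ ε * ((2 * (d - 1) : ℕ) : ℝ) ^ R := by
    intro R hR
    have hmono := choose_middle_mono hR
    have hmonoR : (Nat.choose R (R / 2) : ℝ) * 2 ^ M ≤ (Nat.choose M (M / 2) : ℝ) * 2 ^ R := by
      exact_mod_cast hmono
    have h2M : (0 : ℝ) < 2 ^ M := by positivity
    have hchR : (Nat.choose R (R / 2) : ℝ) ≤ ε * 2 ^ R := by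
      have hchain : (Nat.choose R (R / 2) : ℝ) * 2 ^ M ≤ (ε * 2 ^ R) * 2 ^ M := by
        calc (Nat.choose R (R / 2) : ℝ) * 2 ^ M ≤ (Nat.choose M (M / 2) : ℝ) * 2 ^ R := hmonoR
          _ ≤ (ε * 2 ^ M) * 2 ^ R := mul_le_mul_of_nonneg_right hcbM (by positivity)
          _ = (ε * 2 ^ R) * 2 ^ M := by ring
      exact le_of_mul_le_mul_right hchain h2M
    calc (Nat.choose R (R / 2) : ℝ) * ((d - 1 : ℕ) : ℝ) ^ R
        ≤ (ε * 2 ^ R) * ((d - 1 : ℕ) : ℝ) ^ R :=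
          mul_le_mul_of_nonneg_right hchR (by positivity)
      _ = ε * ((2 * (d - 1) : ℕ) : ℝ) ^ R := by
          push_cast
          rw [mul_pow]
          ring
  -- Step 3: the fiber decomposition
  have hfin : (BridgeSet d n M hgt).Finite := bridgeSet_finite
  set ψ := fun γ : ℕ → Fin d → ℤ => shiftW d n γ (fun _ => e2v d hd) with hψ
  set Bf := hfin.toFinset with hBf
  set Af := Bf.filter (fun γ => γ n = x) with hAfdef
  set B0f := Bf.filter (fun β => ψ β = β) with hB0f
  have hmemBf : ∀ γ, γ ∈ Bf ↔ γ ∈ BridgeSet d n M hgt := fun γ => hfin.mem_toFinset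
  have hψmem : ∀ γ ∈ Bf, ψ γ ∈ Bf := by
    intro γ hγ
    rw [hmemBf] at hγ ⊢
    exact shiftW_mem hγ (fun k _ => e2v_lat hd)
  have hψψ : ∀ γ, ψ (ψ γ) = ψ γ := fun γ => shiftW_shiftW (fun k _ => (e2v_lat hd).2)
  -- identification of numerator and denominator
  have hnum : Nat.card {γ : ℕ → Fin d → ℤ // γ ∈ BridgeSet d n M hgt ∧ γ n = x}
      = Af.card := by
    have hseteq : {γ : ℕ → Fin d → ℤ | γ ∈ BridgeSet d n M hgt ∧ γ n = x} = ↑Af := by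
      ext γ
      simp only [Set.mem_setOf_eq, hAfdef, Finset.coe_filter, hfin.mem_toFinset, hBf]
    calc Nat.card {γ : ℕ → Fin d → ℤ // γ ∈ BridgeSet d n M hgt ∧ γ n = x}
        = ({γ : ℕ → Fin d → ℤ | γ ∈ BridgeSet d n M hgt ∧ γ n = x} : Set _).ncard :=
          Nat.card_coe_set_eq _
      _ = (↑Af : Set (ℕ → Fin d → ℤ)).ncard := by rw [hseteq]
      _ = Af.card := Set.ncard_coe_finset _
  have hden : Nat.card ↥(BridgeSet d n M hgt) = Bf.card := by
    rw [Nat.card_coe_set_eq, Set.ncard_eq_toFinset_card _ hfin]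
  -- fiberwise decomposition
  have hAfib : Af.card = ∑ β ∈ B0f, (Af.filter (fun γ => ψ γ = β)).card := by
    apply Finset.card_eq_sum_card_fiberwise
    intro γ hγ
    have hγB : γ ∈ Bf := (Finset.mem_filter.1 hγ).1
    exact Finset.mem_filter.2 ⟨hψmem γ hγB, hψψ γ⟩
  have hBfib : Bf.card = ∑ β ∈ B0f, (Bf.filter (fun γ => ψ γ = β)).card := by
    apply Finset.card_eq_sum_card_fiberwise
    intro γ hγ
    exact Finset.mem_filter.2 ⟨hψmem γ hγ, hψψ γ⟩
  -- per-fiber inequality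
  have hkey : ∀ β ∈ B0f, ((Af.filter (fun γ => ψ γ = β)).card : ℝ)
      ≤ ε * ((Bf.filter (fun γ => ψ γ = β)).card : ℝ) := by
    intro β hβ0
    obtain ⟨hβBf, hβfix⟩ := Finset.mem_filter.1 hβ0
    have hβB : β ∈ BridgeSet d n M hgt := (hmemBf β).1 hβBf
    have hRge : M ≤ (rf d n β).card := by
      have := hβB.2.1
      rwa [zRenCount_eq_card_rf] at this
    have hA := orbit_x_card hd hfin hβB hβfix x
    have hB := orbit_card hd hfin hβB hβfix
    calc ((Af.filter (fun γ => ψ γ = β)).card : ℝ)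
        ≤ (Nat.choose ((rf d n β).card) ((rf d n β).card / 2)
            * (d - 1) ^ ((rf d n β).card) : ℕ) := by exact_mod_cast hA
      _ = (Nat.choose ((rf d n β).card) ((rf d n β).card / 2) : ℝ)
            * ((d - 1 : ℕ) : ℝ) ^ ((rf d n β).card) := by push_cast; ring
      _ ≤ ε * ((2 * (d - 1) : ℕ) : ℝ) ^ ((rf d n β).card) := hRbound _ hRge
      _ = ε * (((2 * (d - 1)) ^ ((rf d n β).card) : ℕ) : ℝ) := by push_cast; ring
      _ = ε * ((Bf.filter (fun γ => ψ γ = β)).card : ℝ) := by rw [hB]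
  -- assemble
  rw [hnum, hden, hAfib, hBfib]
  push_cast
  calc ∑ β ∈ B0f, ((Af.filter (fun γ => ψ γ = β)).card : ℝ)
      ≤ ∑ β ∈ B0f, ε * ((Bf.filter (fun γ => ψ γ = β)).card : ℝ) :=
        Finset.sum_le_sum hkey
    _ = ε * ∑ β ∈ B0f, ((Bf.filter (fun γ => ψ γ = β)).card : ℝ) := by
        rw [Finset.mul_sum]
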